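/- For a formal power series with real coefficients $(a_k)$, the following are equivalent: (1) the series has positive radius of convergence; (2) the sequence $(a_k r_k)$ is bounded for every sequence $(r_k)$ with $r_k t^k \to 0$ for all $t > 0$. -/

import Mathlib

/-- A power series `∑ aₖ tᵏ` has positive radius of convergence (i.e. `(aₖ t₀ᵏ)` is bounded
for some `t₀ > 0`) if and only if the sequence `(aₖ rₖ)` is bounded for every sequence
`(rₖ)` with `rₖ tᵏ → 0` for all `t > 0`. -/
theorem stmt_2 (a : ℕ → ℝ) :
    (∃ t₀ > (0 : ℝ), ∃ C : ℝ, ∀ k, |a k * t₀ ^ k| ≤ C) ↔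
    (∀ r : ℕ → ℝ,
      (∀ t > (0 : ℝ), Filter.Tendsto (fun k => r k * t ^ k) Filter.atTop (nhds 0)) →
      ∃ C : ℝ, ∀ k, |a k * r k| ≤ C) := by
  classical
  constructor
  · rintro ⟨t₀, ht₀, C, hC⟩ r hr
    have ht := (hr t₀⁻¹ (by positivity)).abs
    rw [abs_zero] at ht
    obtain ⟨M, hM⟩ := ht.bddAbove_range
    refine ⟨C * M, fun k => ?_⟩
    have h1 : |r k * t₀⁻¹ ^ k| ≤ M := hM ⟨k, rfl⟩
    have hC0 : 0 ≤ C := le_trans (abs_nonneg _) (hC 0)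
    have key : a k * r k = (a k * t₀ ^ k) * (r k * t₀⁻¹ ^ k) := by
      field_simp; rw [mul_assoc, ← mul_pow, mul_one_div_cancel ht₀.ne', one_pow, mul_one]
    rw [key, abs_mul]
    exact mul_le_mul (hC k) h1 (abs_nonneg _) hC0
  · intro hall
    by_contra hno
    push_neg at hno
    -- hno : ∀ t₀ > 0, ∀ C, ∃ k, C < |a k * t₀ ^ k|
    have key : ∀ n K : ℕ, ∃ m, K < m ∧ ((n : ℝ) + 1) ^ (m + 1) < |a m| := by
      intro n K
      set c : ℝ := (n : ℝ) + 1 with hc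
      have hc0 : (0:ℝ) < c := by positivity
      set S : ℝ := ∑ j ∈ Finset.range (K + 1), |a j * c⁻¹ ^ j| with hS
      have hS0 : 0 ≤ S := Finset.sum_nonneg fun j _ => abs_nonneg _
      obtain ⟨m, hm⟩ := hno c⁻¹ (by positivity) (c + S)
      refine ⟨m, ?_, ?_⟩
      · by_contra hle
        push_neg at hle
        have hmem : |a m * c⁻¹ ^ m| ≤ S :=
          Finset.single_le_sum (f := fun j => |a j * c⁻¹ ^ j|)
            (fun j _ => abs_nonneg _) (Finset.mem_range.mpr (Nat.lt_succ_of_le hle))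
        linarith
      · have habs : |a m * c⁻¹ ^ m| = |a m| * c⁻¹ ^ m := by
          rw [abs_mul, abs_of_nonneg (by positivity : (0:ℝ) ≤ c⁻¹ ^ m)]
        rw [habs] at hm
        have h1 : c < |a m| * c⁻¹ ^ m := by linarith
        have h2 : c < |a m| / c ^ m := by
          rwa [div_eq_mul_inv, ← inv_pow]
        have h3 : c * c ^ m < |a m| := (lt_div_iff₀ (by positivity)).mp h2
        calc c ^ (m + 1) = c * c ^ m := by rw [pow_succ]; ring
          _ < |a m| := h3
    choose f hf1 hf2 using key
    set k : ℕ → ℕ := fun n => Nat.rec (f 0 0) (fun n ih => f (n + 1) ih) n with hk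
    have hk_succ : ∀ n, k (n + 1) = f (n + 1) (k n) := fun n => rfl
    have hk_mono : StrictMono k := by
      apply strictMono_nat_of_lt_succ
      intro n
      rw [hk_succ]
      exact hf1 (n + 1) (k n)
    have hk_prop : ∀ n : ℕ, ((n : ℝ) + 1) ^ (k n + 1) < |a (k n)| := by
      intro n
      cases n with
      | zero => exact hf2 0 0
      | succ n => rw [hk_succ]; exact hf2 (n + 1) (k n)
    have hk_ge : ∀ n, n ≤ k n := fun n => hk_mono.le_apply
    have hapos : ∀ n, 0 < |a (k n)| := fun n =>
      lt_of_le_of_lt (by positivity) (hk_prop n)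
    set r : ℕ → ℝ := fun m =>
      if hm : ∃ n, k n = m then ((hm.choose : ℝ) + 1) / |a m| else 0 with hr
    have hr_at : ∀ n, r (k n) = ((n : ℝ) + 1) / |a (k n)| := by
      intro n
      have hm : ∃ n', k n' = k n := ⟨n, rfl⟩
      have hn' : hm.choose = n := hk_mono.injective hm.choose_spec
      simp only [hr, dif_pos hm, hn']
    have htend : ∀ t > (0:ℝ),
        Filter.Tendsto (fun m => r m * t ^ m) Filter.atTop (nhds 0) := by
      intro t ht
      rw [NormedAddCommGroup.tendsto_nhds_zero]
      intro ε hε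
      obtain ⟨N₁, hN₁⟩ := exists_nat_gt (2 * t)
      obtain ⟨N₂, hN₂⟩ := exists_pow_lt_of_lt_one hε (by norm_num : (1:ℝ)/2 < 1)
      set N := max N₁ N₂ with hN
      rw [Filter.eventually_atTop]
      refine ⟨k N + 1, fun m hm => ?_⟩
      rw [Real.norm_eq_abs]
      by_cases hex : ∃ n, k n = m
      · obtain ⟨n, hn⟩ := hex
        subst hn
        rw [hr_at n]
        have hnN : N < n := by
          by_contra hle
          push_neg at hle
          have := hk_mono.monotone hle
          omega
        have hkn : N₂ ≤ k n := le_trans (le_trans (le_max_right _ _) hnN.le) (hk_ge n)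
        have h2t : 2 * t < (n : ℝ) + 1 := by
          have : (N₁ : ℝ) ≤ (n : ℝ) := by
            exact_mod_cast le_trans (le_max_left N₁ N₂) hnN.le
          linarith
        have hak := hk_prop n
        have hap := hapos n
        have habs : |((n : ℝ) + 1) / |a (k n)| * t ^ (k n)|
            = ((n : ℝ) + 1) / |a (k n)| * t ^ (k n) := by
          rw [abs_of_nonneg]; positivity
        rw [habs]
        have h1 : ((n : ℝ) + 1) / |a (k n)| * t ^ (k n)
            < ((n : ℝ) + 1) / (((n : ℝ) + 1) ^ (k n + 1)) * t ^ (k n) := by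
          apply mul_lt_mul_of_pos_right _ (by positivity)
          exact div_lt_div_of_pos_left (by positivity) (by positivity) hak
        have h2 : ((n : ℝ) + 1) / (((n : ℝ) + 1) ^ (k n + 1)) * t ^ (k n)
            = (t / ((n : ℝ) + 1)) ^ (k n) := by
          rw [pow_succ, div_pow]
          field_simp
        have h3 : (t / ((n : ℝ) + 1)) ^ (k n) ≤ (1/2 : ℝ) ^ (k n) := by
          apply pow_le_pow_left₀ (by positivity)
          rw [div_le_div_iff₀ (by positivity) (by norm_num)]
          linarith
        have h4 : (1/2 : ℝ) ^ (k n) ≤ (1/2 : ℝ) ^ N₂ :=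
          pow_le_pow_of_le_one (by norm_num) (by norm_num) hkn
        linarith
      · have hr0 : r m = 0 := by simp only [hr, dif_neg hex]
        rw [hr0]
        simpa using hε
    obtain ⟨C, hC⟩ := hall r htend
    obtain ⟨n, hn⟩ := exists_nat_gt C
    have hCn := hC (k n)
    rw [hr_at n] at hCn
    have hap := hapos n
    have heq : |a (k n) * (((n : ℝ) + 1) / |a (k n)|)| = (n : ℝ) + 1 := by
      rw [abs_mul, abs_div, abs_abs,
        abs_of_nonneg (by positivity : (0:ℝ) ≤ (n : ℝ) + 1)]
      field_simp
    rw [heq] at hCn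
    linarith
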